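/- Let $(w_n)_{n\ge1}$ be a strictly increasing sequence in $(0,1)$ with $w_n\to1$, and let $(\rho_n)_{n\ge1}$ be positive reals with $\sum_{k>n}\frac{1-w_k}{1-w_{k+1}}\rho_k = o(\rho_n)$ as $n\to\infty$. Then there exist a constant $C>0$ and an integer $N$ such that for all $n\ge N$ and all $r\in[w_n,w_{n+1}]$, $P_h\!\left(\frac{1-r w_n}{1+r w_n}\right) - P_h\!\left(\frac{1-w_n}{1+w_n}\right) \ge C\,\frac{\rho_n}{1-w_n}$. -/

import Mathlib

open Filter MeasureTheory
open scoped ENNReal NNReal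

/-- `t_k := (1 - w_k²)/(1 + w_k²)`. -/
noncomputable def tseq (w : ℕ → ℝ) (k : ℕ) : ℝ := (1 - w k ^ 2) / (1 + w k ^ 2)

/-- `ε_k := ((1 - w_k)/(1 - w_{k+1})) ρ_k`. -/
noncomputable def epsseq (w ρ : ℕ → ℝ) (k : ℕ) : ℝ := (1 - w k) / (1 - w (k + 1)) * ρ k

/-- `h := ∑_{k≥1} (ε_k/t_k) 1_{[2t_k, 3t_k]}`. -/
noncomputable def hfun (w ρ : ℕ → ℝ) (x : ℝ) : ℝ :=
  ∑' k : ℕ, Set.indicator (Set.Icc (2 * tseq w (k + 1)) (3 * tseq w (k + 1)))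
    (fun _ => epsseq w ρ (k + 1) / tseq w (k + 1)) x

/-- `P_h(y) := (1/π) ∫_ℝ y/(y² + x²) h(x) dx`, the Poisson integral of `h` for the
upper half-plane evaluated at `iy`. -/
noncomputable def Ph (w ρ : ℕ → ℝ) (y : ℝ) : ℝ :=
  (1 / Real.pi) * ∫ x : ℝ, y / (y ^ 2 + x ^ 2) * hfun w ρ x

namespace PoissonAux

lemma den_pos {y : ℝ} (hy : 0 < y) (x : ℝ) : 0 < y ^ 2 + x ^ 2 :=
  add_pos_of_pos_of_nonneg (pow_pos hy 2) (sq_nonneg x)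

/-- The Poisson kernel (in `x`, at height `y`) is continuous for `y > 0`. -/
lemma Kcont {y : ℝ} (hy : 0 < y) : Continuous fun x : ℝ => y / (y ^ 2 + x ^ 2) :=
  continuous_const.div (by continuity) fun x => (den_pos hy x).ne'

lemma Kle {y : ℝ} (hy : 0 < y) (x : ℝ) : y / (y ^ 2 + x ^ 2) ≤ 1 / y := by
  rw [div_le_div_iff₀ (den_pos hy x) hy]
  nlinarith [sq_nonneg x]

lemma Kmono {y y' x : ℝ} (hy' : 0 < y') (h : y' ≤ y) (hx : y * y' ≤ x ^ 2) :
    y' / (y' ^ 2 + x ^ 2) ≤ y / (y ^ 2 + x ^ 2) := by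
  have hy : 0 < y := lt_of_lt_of_le hy' h
  rw [div_le_div_iff₀ (den_pos hy' x) (den_pos hy x)]
  nlinarith [mul_nonneg (sub_nonneg.2 h) (sub_nonneg.2 hx)]

lemma Kgap {y y' x t : ℝ} (hy' : 0 < y') (h : y' ≤ y) (hyt : y ≤ t)
    (hx1 : 2 * t ≤ x) (hx2 : x ≤ 3 * t) :
    y' / (y' ^ 2 + x ^ 2) + 3 / 100 * (y - y') / t ^ 2 ≤ y / (y ^ 2 + x ^ 2) := by
  have ht : 0 < t := lt_of_lt_of_le hy' (h.trans hyt)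
  have hx : 0 < x := lt_of_lt_of_le (by linarith) hx1
  have hy : 0 < y := lt_of_lt_of_le hy' h
  have key : 3 / 100 * (y - y') / t ^ 2 ≤ y / (y ^ 2 + x ^ 2) - y' / (y' ^ 2 + x ^ 2) := by
    rw [div_sub_div _ _ (den_pos hy x).ne' (den_pos hy' x).ne',
      div_le_div_iff₀ (pow_pos ht 2) (mul_pos (den_pos hy x) (den_pos hy' x))]
    have h1 : y ^ 2 + x ^ 2 ≤ 10 * t ^ 2 := by nlinarith
    have h2 : y' ^ 2 + x ^ 2 ≤ 10 * t ^ 2 := by nlinarith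
    have h3 : 3 * t ^ 2 ≤ x ^ 2 - y * y' := by
      nlinarith [mul_le_mul hyt (h.trans hyt) hy'.le ht.le,
        mul_nonneg (by linarith : (0:ℝ) ≤ x - 2 * t) (by linarith : (0:ℝ) ≤ x + 2 * t)]
    have h4 : 0 ≤ y - y' := by linarith
    calc 3 / 100 * (y - y') * ((y ^ 2 + x ^ 2) * (y' ^ 2 + x ^ 2))
        ≤ 3 / 100 * (y - y') * (10 * t ^ 2 * (10 * t ^ 2)) := by
          apply mul_le_mul_of_nonneg_left _ (by nlinarith)
          exact mul_le_mul h1 h2 (by positivity) (by positivity)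
      _ = t ^ 2 * ((y - y') * (3 * t ^ 2)) := by ring
      _ ≤ t ^ 2 * ((y - y') * (x ^ 2 - y * y')) := by
          apply mul_le_mul_of_nonneg_left _ (by positivity)
          exact mul_le_mul_of_nonneg_left h3 h4
      _ = (y * (y' ^ 2 + x ^ 2) - (y ^ 2 + x ^ 2) * y') * t ^ 2 := by ring
  linarith

/-- The integral of the Poisson kernel over `[2t, 3t]`. -/
noncomputable def Kint (t y : ℝ) : ℝ := ∫ x in Set.Icc (2 * t) (3 * t), y / (y ^ 2 + x ^ 2)

lemma Kint_integrableOn {y : ℝ} (t : ℝ) (hy : 0 < y) :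
    IntegrableOn (fun x : ℝ => y / (y ^ 2 + x ^ 2)) (Set.Icc (2 * t) (3 * t)) :=
  (Kcont hy).integrableOn_Icc

lemma const_integrableOn (c t : ℝ) :
    IntegrableOn (fun _ : ℝ => c) (Set.Icc (2 * t) (3 * t)) := by
  exact integrableOn_const (by rw [Real.volume_Icc]; exact ENNReal.ofReal_ne_top)

lemma vol_Icc {t : ℝ} (ht : 0 < t) :
    (volume (Set.Icc (2 * t) (3 * t))).toReal = t := by
  rw [Real.volume_Icc, show 3 * t - 2 * t = t by ring, ENNReal.toReal_ofReal ht.le]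

lemma Kint_nonneg {t y : ℝ} (hy : 0 < y) : 0 ≤ Kint t y :=
  setIntegral_nonneg measurableSet_Icc fun x _ =>
    div_nonneg hy.le (den_pos hy x).le

lemma Kint_le {t y : ℝ} (ht : 0 < t) (hy : 0 < y) : Kint t y ≤ t / y := by
  have h : Kint t y ≤ ∫ _ in Set.Icc (2 * t) (3 * t), 1 / y :=
    setIntegral_mono_on (Kint_integrableOn t hy) (const_integrableOn _ _)
      measurableSet_Icc fun x _ => Kle hy x
  rw [setIntegral_const, smul_eq_mul, measureReal_def, vol_Icc ht] at h
  calc Kint t y ≤ t * (1 / y) := h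
    _ = t / y := by ring

lemma Kint_mono {t y y' : ℝ} (hy' : 0 < y') (h : y' ≤ y) (ht : 0 < t)
    (hx : y * y' ≤ 4 * t ^ 2) : Kint t y' ≤ Kint t y := by
  apply setIntegral_mono_on (Kint_integrableOn t hy')
    (Kint_integrableOn t (lt_of_lt_of_le hy' h)) measurableSet_Icc
  intro x hxm
  apply Kmono hy' h
  have h1 : 2 * t ≤ x := hxm.1
  nlinarith

lemma Kint_gap {t y y' : ℝ} (hy' : 0 < y') (h : y' ≤ y) (hyt : y ≤ t) :
    Kint t y' + 3 / 100 * ((y - y') / t) ≤ Kint t y := by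
  have ht : 0 < t := lt_of_lt_of_le hy' (h.trans hyt)
  have key : (∫ x in Set.Icc (2 * t) (3 * t),
      (y' / (y' ^ 2 + x ^ 2) + 3 / 100 * (y - y') / t ^ 2)) ≤ Kint t y := by
    apply setIntegral_mono_on
      ((Kint_integrableOn t hy').add (const_integrableOn _ _))
      (Kint_integrableOn t (lt_of_lt_of_le hy' h)) measurableSet_Icc
    intro x hx
    exact Kgap hy' h hyt hx.1 hx.2
  rw [integral_add (Kint_integrableOn t hy') (const_integrableOn _ _),
    setIntegral_const, smul_eq_mul, measureReal_def, vol_Icc ht] at key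
  have heq : t * (3 / 100 * (y - y') / t ^ 2) = 3 / 100 * ((y - y') / t) := by
    have htne : t ≠ 0 := ht.ne'
    field_simp
  rw [heq] at key
  exact key

end PoissonAux

open PoissonAux

/-- Rewriting `Ph` as a sum of kernel integrals against the bumps. -/
lemma Ph_eq (w ρ : ℕ → ℝ) (ht : ∀ k, 0 < tseq w k) (hε : ∀ k, 0 < epsseq w ρ k)
    (hsum' : Summable fun k => epsseq w ρ (k + 1)) {y : ℝ} (hy : 0 < y) :
    Ph w ρ y = (1 / Real.pi) *
      ∑' k : ℕ, Kint (tseq w (k + 1)) y * (epsseq w ρ (k + 1) / tseq w (k + 1)) := by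
  have hF : ∀ k : ℕ, (fun x : ℝ => y / (y ^ 2 + x ^ 2) *
      Set.indicator (Set.Icc (2 * tseq w (k + 1)) (3 * tseq w (k + 1)))
        (fun _ => epsseq w ρ (k + 1) / tseq w (k + 1)) x)
      = Set.indicator (Set.Icc (2 * tseq w (k + 1)) (3 * tseq w (k + 1)))
        (fun x => y / (y ^ 2 + x ^ 2) * (epsseq w ρ (k + 1) / tseq w (k + 1))) := by
    intro k
    funext x
    by_cases hx : x ∈ Set.Icc (2 * tseq w (k + 1)) (3 * tseq w (k + 1)) <;>
      simp [Set.indicator_of_mem, Set.indicator_of_notMem, hx]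
  unfold Ph
  congr 1
  have hstep : (fun x : ℝ => y / (y ^ 2 + x ^ 2) * hfun w ρ x)
      = fun x => ∑' k : ℕ, Set.indicator
          (Set.Icc (2 * tseq w (k + 1)) (3 * tseq w (k + 1)))
          (fun x => y / (y ^ 2 + x ^ 2) * (epsseq w ρ (k + 1) / tseq w (k + 1))) x := by
    funext x
    simp only [hfun]
    rw [← tsum_mul_left]
    exact tsum_congr fun k => congrFun (hF k) x
  rw [hstep]
  have hmeas : ∀ k : ℕ, AEStronglyMeasurable (fun x : ℝ => Set.indicator
      (Set.Icc (2 * tseq w (k + 1)) (3 * tseq w (k + 1)))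
      (fun x => y / (y ^ 2 + x ^ 2) * (epsseq w ρ (k + 1) / tseq w (k + 1))) x) volume :=
    fun k => (((Kcont hy).measurable.mul_const _).indicator measurableSet_Icc).aestronglyMeasurable
  have hbd : ∀ k : ℕ, (∫⁻ x : ℝ, ‖Set.indicator
      (Set.Icc (2 * tseq w (k + 1)) (3 * tseq w (k + 1)))
      (fun x => y / (y ^ 2 + x ^ 2) * (epsseq w ρ (k + 1) / tseq w (k + 1))) x‖₊)
      ≤ ENNReal.ofReal (epsseq w ρ (k + 1) / y) := by
    intro k
    set s := Set.Icc (2 * tseq w (k + 1)) (3 * tseq w (k + 1)) with hs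
    set c := epsseq w ρ (k + 1) / tseq w (k + 1) with hc
    have hc0 : 0 ≤ c := le_of_lt (div_pos (hε _) (ht _))
    have hpt : ∀ x : ℝ, (‖Set.indicator s (fun x => y / (y ^ 2 + x ^ 2) * c) x‖₊ : ℝ≥0∞)
        ≤ Set.indicator s (fun _ => ENNReal.ofReal (c / y)) x := by
      intro x
      by_cases hx : x ∈ s
      · rw [Set.indicator_of_mem hx, Set.indicator_of_mem hx,
          ← enorm_eq_nnnorm, Real.enorm_eq_ofReal (mul_nonneg (div_nonneg hy.le (den_pos hy x).le) hc0)]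
        apply ENNReal.ofReal_le_ofReal
        calc y / (y ^ 2 + x ^ 2) * c ≤ 1 / y * c :=
              mul_le_mul_of_nonneg_right (Kle hy x) hc0
          _ = c / y := by ring
      · rw [Set.indicator_of_notMem hx, Set.indicator_of_notMem hx]
        simp
    calc (∫⁻ x : ℝ, ‖Set.indicator s (fun x => y / (y ^ 2 + x ^ 2) * c) x‖₊)
        ≤ ∫⁻ x : ℝ, Set.indicator s (fun _ => ENNReal.ofReal (c / y)) x :=
          lintegral_mono hpt
      _ = ENNReal.ofReal (c / y) * volume s := lintegral_indicator_const measurableSet_Icc _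
      _ ≤ ENNReal.ofReal (epsseq w ρ (k + 1) / y) := by
          rw [hs, Real.volume_Icc, ← ENNReal.ofReal_mul (div_nonneg hc0 hy.le)]
          apply ENNReal.ofReal_le_ofReal
          have htk : tseq w (k + 1) ≠ 0 := (ht (k + 1)).ne'
          have hyne : y ≠ 0 := hy.ne'
          have : c / y * (3 * tseq w (k + 1) - 2 * tseq w (k + 1))
              = epsseq w ρ (k + 1) / y := by
            rw [hc]; field_simp; ring
          rw [this]
  have hfin : (∑' k : ℕ, ∫⁻ x : ℝ, ‖Set.indicator
      (Set.Icc (2 * tseq w (k + 1)) (3 * tseq w (k + 1)))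
      (fun x => y / (y ^ 2 + x ^ 2) * (epsseq w ρ (k + 1) / tseq w (k + 1))) x‖₊) ≠ ⊤ := by
    apply ne_top_of_le_ne_top _ (ENNReal.tsum_le_tsum hbd)
    rw [← ENNReal.ofReal_tsum_of_nonneg (fun k => div_nonneg (hε _).le hy.le) (hsum'.div_const y)]
    exact ENNReal.ofReal_ne_top
  rw [integral_tsum hmeas hfin]
  exact tsum_congr fun k => by
    rw [integral_indicator measurableSet_Icc, integral_mul_const]
    rfl

set_option maxHeartbeats 1000000 in
/-- The analytic core of Lemma 3.3: under the hypotheses of the lemma there are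
`C > 0` and `N` such that for all `n ≥ N` and all `r ∈ [wₙ, wₙ₊₁]`,
`P_h((1-rwₙ)/(1+rwₙ)) - P_h((1-wₙ)/(1+wₙ)) ≥ C ρₙ/(1-wₙ)`. -/
theorem poisson_integral_radial_growth
    (w ρ : ℕ → ℝ) (hw_mono : StrictMono w) (hw_mem : ∀ n, w n ∈ Set.Ioo (0 : ℝ) 1)
    (hw_lim : Tendsto w atTop (nhds 1))
    (hρ : ∀ n, 0 < ρ n)
    (hsum : Summable (fun k : ℕ => epsseq w ρ k))
    (hlittleo : Tendsto (fun n : ℕ => (∑' k : ℕ, epsseq w ρ (n + 1 + k)) / ρ n)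
      atTop (nhds 0)) :
    ∃ C > (0 : ℝ), ∃ N : ℕ, ∀ n ≥ N, ∀ r ∈ Set.Icc (w n) (w (n + 1)),
      C * (ρ n / (1 - w n)) ≤
        Ph w ρ ((1 - r * w n) / (1 + r * w n)) - Ph w ρ ((1 - w n) / (1 + w n)) := by
  have hw0 : ∀ k, 0 < w k := fun k => (hw_mem k).1
  have hw1 : ∀ k, w k < 1 := fun k => (hw_mem k).2
  have htpos : ∀ k, 0 < tseq w k := by
    intro k
    have h1 := hw0 k; have h2 := hw1 k
    exact div_pos (by nlinarith) (by positivity)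
  have hεpos : ∀ k, 0 < epsseq w ρ k := by
    intro k
    have h1 := hw1 k; have h2 := hw1 (k + 1)
    exact mul_pos (div_pos (by linarith) (by linarith)) (hρ k)
  have hsum' : Summable fun k => epsseq w ρ (k + 1) := (summable_nat_add_iff 1).2 hsum
  have htanti : ∀ {k m : ℕ}, k ≤ m → tseq w m ≤ tseq w k := by
    intro k m hkm
    have h1 : w k ≤ w m := hw_mono.monotone hkm
    have h2 := hw0 k; have h3 := hw0 m; have h4 := hw1 k; have h5 := hw1 m
    unfold tseq
    rw [div_le_div_iff₀ (by positivity) (by positivity)]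
    nlinarith
  -- choose N
  have hev1 : ∀ᶠ n in atTop,
      (∑' k : ℕ, epsseq w ρ (n + 1 + k)) / ρ n < 3 / 6400 :=
    hlittleo.eventually (eventually_lt_nhds (by norm_num))
  have hev2 : ∀ᶠ n in atTop, (1 : ℝ) / 2 < w n :=
    hw_lim.eventually (eventually_gt_nhds (by norm_num))
  obtain ⟨N, hN⟩ := eventually_atTop.1 ((hev1.and hev2).and (eventually_ge_atTop 1))
  have hπ : 0 < Real.pi := Real.pi_pos
  refine ⟨3 / (3200 * Real.pi), by positivity, N, ?_⟩
  intro n hn r hr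
  obtain ⟨⟨hS, ha2⟩, hn1⟩ := hN n hn
  set a := w n with ha_def
  set b := w (n + 1) with hb_def
  have ha : 0 < a := hw0 n
  have ha1 : a < 1 := hw1 n
  have hb1 : b < 1 := hw1 (n + 1)
  have hab : a < b := hw_mono (Nat.lt_succ_self n)
  have hane : (1 : ℝ) - a ≠ 0 := by intro hx; linarith [hx]
  have hbne : (1 : ℝ) - b ≠ 0 := by intro hx; linarith [hx]
  have hra : a ≤ r := hr.1
  have hrb : r ≤ b := hr.2
  have hr0 : 0 < r := lt_of_lt_of_le ha hra
  have hr1 : r < 1 := lt_of_le_of_lt hrb hb1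
  set y0 := (1 - a) / (1 + a) with hy0_def
  set yr := (1 - r * a) / (1 + r * a) with hyr_def
  have hy0 : 0 < y0 := div_pos (by linarith) (by linarith)
  have hra1 : r * a < 1 := by nlinarith
  have hra0 : 0 < r * a := mul_pos hr0 ha
  have hyr : 0 < yr := div_pos (by linarith) (by linarith)
  have hy0yr : y0 ≤ yr := by
    rw [hy0_def, hyr_def, div_le_div_iff₀ (by linarith) (by linarith)]
    nlinarith
  have hgap : (1 - b) / 4 ≤ yr - y0 := by
    have key : yr - y0 = 2 * a * (1 - r) / ((1 + r * a) * (1 + a)) := by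
      rw [hyr_def, hy0_def, div_sub_div _ _ (by linarith : (1 : ℝ) + r * a ≠ 0)
        (by linarith : (1 : ℝ) + a ≠ 0)]
      congr 1
      ring
    rw [key, le_div_iff₀ (by nlinarith)]
    nlinarith [mul_nonneg (by linarith : (0:ℝ) ≤ 1 - b)
        (by nlinarith : (0:ℝ) ≤ 4 - (1 + r * a) * (1 + a)),
      mul_nonneg (by linarith : (0:ℝ) ≤ 2 * a - 1) (by linarith : (0:ℝ) ≤ 1 - r)]
  have htn : tseq w n = (1 - a ^ 2) / (1 + a ^ 2) := by
    rw [tseq]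
  have ht0 : 0 < tseq w n := htpos n
  have hyrt : yr ≤ tseq w n := by
    rw [htn, hyr_def, div_le_div_iff₀ (by linarith) (by positivity)]
    nlinarith [mul_le_mul_of_nonneg_right hra ha.le]
  have ht0le : tseq w n ≤ 2 * (1 - a) := by
    rw [htn, div_le_iff₀ (by positivity)]
    nlinarith [mul_nonneg (by linarith : (0:ℝ) ≤ 1 - a)
      (by nlinarith [sq_nonneg a] : (0:ℝ) ≤ 1 - a + 2 * a ^ 2)]
  have hy0ge : (1 - a) / 2 ≤ y0 := by
    rw [hy0_def, div_le_div_iff₀ (by norm_num) (by linarith)]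
    nlinarith
  -- summability of the two series
  have hbound : ∀ (y : ℝ), 0 < y → ∀ k,
      Kint (tseq w (k + 1)) y * (epsseq w ρ (k + 1) / tseq w (k + 1))
      ≤ epsseq w ρ (k + 1) / y := by
    intro y hy k
    have htk : 0 < tseq w (k + 1) := htpos (k + 1)
    have htkne : tseq w (k + 1) ≠ 0 := htk.ne'
    have hyne : y ≠ 0 := hy.ne'
    calc Kint (tseq w (k + 1)) y * (epsseq w ρ (k + 1) / tseq w (k + 1))
        ≤ tseq w (k + 1) / y * (epsseq w ρ (k + 1) / tseq w (k + 1)) :=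
          mul_le_mul_of_nonneg_right (Kint_le htk hy)
            (div_nonneg (hεpos _).le htk.le)
      _ = epsseq w ρ (k + 1) / y := by field_simp
  have hAnn : ∀ k, 0 ≤ Kint (tseq w (k + 1)) yr * (epsseq w ρ (k + 1) / tseq w (k + 1)) :=
    fun k => mul_nonneg (Kint_nonneg hyr) (div_nonneg (hεpos _).le (htpos _).le)
  have hBnn : ∀ k, 0 ≤ Kint (tseq w (k + 1)) y0 * (epsseq w ρ (k + 1) / tseq w (k + 1)) :=
    fun k => mul_nonneg (Kint_nonneg hy0) (div_nonneg (hεpos _).le (htpos _).le)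
  have hAsum : Summable fun k =>
      Kint (tseq w (k + 1)) yr * (epsseq w ρ (k + 1) / tseq w (k + 1)) :=
    Summable.of_nonneg_of_le hAnn (hbound yr hyr) (hsum'.div_const yr)
  have hBsum : Summable fun k =>
      Kint (tseq w (k + 1)) y0 * (epsseq w ρ (k + 1) / tseq w (k + 1)) :=
    Summable.of_nonneg_of_le hBnn (hbound y0 hy0) (hsum'.div_const y0)
  have hDsum : Summable fun k =>
      Kint (tseq w (k + 1)) yr * (epsseq w ρ (k + 1) / tseq w (k + 1))
      - Kint (tseq w (k + 1)) y0 * (epsseq w ρ (k + 1) / tseq w (k + 1)) :=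
    hAsum.sub hBsum
  -- main estimate for the series of differences
  have key : 3 / 3200 * (ρ n / (1 - a)) ≤ ∑' k : ℕ,
      (Kint (tseq w (k + 1)) yr * (epsseq w ρ (k + 1) / tseq w (k + 1))
      - Kint (tseq w (k + 1)) y0 * (epsseq w ρ (k + 1) / tseq w (k + 1))) := by
    rw [← hDsum.sum_add_tsum_nat_add n]
    have hfin : 3 / 1600 * (ρ n / (1 - a)) ≤ ∑ i ∈ Finset.range n,
        (Kint (tseq w (i + 1)) yr * (epsseq w ρ (i + 1) / tseq w (i + 1))
        - Kint (tseq w (i + 1)) y0 * (epsseq w ρ (i + 1) / tseq w (i + 1))) := by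
      have hidx : n - 1 + 1 = n := Nat.succ_pred_eq_of_pos hn1
      have hterm : 3 / 1600 * (ρ n / (1 - a))
          ≤ Kint (tseq w (n - 1 + 1)) yr * (epsseq w ρ (n - 1 + 1) / tseq w (n - 1 + 1))
          - Kint (tseq w (n - 1 + 1)) y0 * (epsseq w ρ (n - 1 + 1) / tseq w (n - 1 + 1)) := by
        rw [hidx]
        have hKg : Kint (tseq w n) y0 + 3 / 100 * ((yr - y0) / tseq w n)
            ≤ Kint (tseq w n) yr := Kint_gap hy0 hy0yr hyrt
        have hstep1 : 3 / 100 * ((yr - y0) / tseq w n) * (epsseq w ρ n / tseq w n)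
            ≤ (Kint (tseq w n) yr - Kint (tseq w n) y0) * (epsseq w ρ n / tseq w n) :=
          mul_le_mul_of_nonneg_right (by linarith)
            (div_nonneg (hεpos n).le ht0.le)
        have hrw : (Kint (tseq w n) yr - Kint (tseq w n) y0) * (epsseq w ρ n / tseq w n)
            = Kint (tseq w n) yr * (epsseq w ρ n / tseq w n)
            - Kint (tseq w n) y0 * (epsseq w ρ n / tseq w n) := by ring
        rw [← hrw]
        refine le_trans ?_ hstep1
        have heps : epsseq w ρ n = (1 - a) / (1 - b) * ρ n := by
          simp only [epsseq, ← ha_def, ← hb_def]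
        have h2 : (1 - a) * ρ n / 4 ≤ (yr - y0) * epsseq w ρ n := by
          have hεb : (1 - b) / 4 * epsseq w ρ n = (1 - a) * ρ n / 4 := by
            rw [heps]; field_simp
          calc (1 - a) * ρ n / 4 = (1 - b) / 4 * epsseq w ρ n := hεb.symm
            _ ≤ (yr - y0) * epsseq w ρ n :=
              mul_le_mul_of_nonneg_right hgap (hεpos n).le
        have h3 : tseq w n ^ 2 ≤ 4 * (1 - a) ^ 2 := by nlinarith
        have h4 : (1 - a) * ρ n / 4 / (4 * (1 - a) ^ 2)
            ≤ (yr - y0) * epsseq w ρ n / tseq w n ^ 2 :=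
          div_le_div₀ (le_trans (div_nonneg (mul_nonneg (by linarith) (hρ n).le) (by norm_num)) h2) h2 (pow_pos ht0 2) h3
        have h5 : (1 - a) * ρ n / 4 / (4 * (1 - a) ^ 2) = ρ n / (16 * (1 - a)) := by
          field_simp
          ring
        have h6 : 3 / 100 * ((yr - y0) / tseq w n) * (epsseq w ρ n / tseq w n)
            = 3 / 100 * ((yr - y0) * epsseq w ρ n / tseq w n ^ 2) := by
          have : tseq w n ≠ 0 := ht0.ne'
          field_simp
        rw [h6]
        calc 3 / 1600 * (ρ n / (1 - a)) = 3 / 100 * (ρ n / (16 * (1 - a))) := by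
              rw [← div_div]
              ring
          _ = 3 / 100 * ((1 - a) * ρ n / 4 / (4 * (1 - a) ^ 2)) := by rw [h5]
          _ ≤ 3 / 100 * ((yr - y0) * epsseq w ρ n / tseq w n ^ 2) :=
            mul_le_mul_of_nonneg_left h4 (by norm_num)
      have hmem : n - 1 ∈ Finset.range n := Finset.mem_range.2 (by omega)
      have hnonneg : ∀ i ∈ Finset.range n, 0 ≤
          Kint (tseq w (i + 1)) yr * (epsseq w ρ (i + 1) / tseq w (i + 1))
          - Kint (tseq w (i + 1)) y0 * (epsseq w ρ (i + 1) / tseq w (i + 1)) := by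
        intro i hi
        have hin : i + 1 ≤ n := Finset.mem_range.1 hi
        have hti : tseq w n ≤ tseq w (i + 1) := htanti hin
        have htip : 0 < tseq w (i + 1) := htpos (i + 1)
        have hyy : yr * y0 ≤ 4 * tseq w (i + 1) ^ 2 := by
          nlinarith [mul_le_mul (hyrt.trans hti) ((hy0yr.trans hyrt).trans hti)
            hy0.le htip.le]
        have hmono := Kint_mono hy0 hy0yr htip hyy
        have := mul_le_mul_of_nonneg_right hmono
          (div_nonneg (hεpos (i + 1)).le htip.le)
        linarith
      exact le_trans hterm (Finset.single_le_sum hnonneg hmem)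
    have htail : -(3 / 3200 * (ρ n / (1 - a))) ≤ ∑' k : ℕ,
        (Kint (tseq w (k + n + 1)) yr * (epsseq w ρ (k + n + 1) / tseq w (k + n + 1))
        - Kint (tseq w (k + n + 1)) y0 * (epsseq w ρ (k + n + 1) / tseq w (k + n + 1))) := by
      have hεtail : Summable fun k => epsseq w ρ (n + 1 + k) := by
        apply ((summable_nat_add_iff (n + 1)).2 hsum).congr
        intro k
        congr 1
        omega
      have htermle : ∀ k : ℕ, -(2 / (1 - a) * epsseq w ρ (n + 1 + k))
          ≤ Kint (tseq w (k + n + 1)) yr * (epsseq w ρ (k + n + 1) / tseq w (k + n + 1))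
          - Kint (tseq w (k + n + 1)) y0 * (epsseq w ρ (k + n + 1) / tseq w (k + n + 1)) := by
        intro k
        have hidx2 : k + n + 1 = n + 1 + k := by omega
        have h1 : Kint (tseq w (k + n + 1)) y0
            * (epsseq w ρ (k + n + 1) / tseq w (k + n + 1))
            ≤ epsseq w ρ (k + n + 1) / y0 := by
          have := hbound y0 hy0 (k + n)
          exact this
        have h2 : epsseq w ρ (k + n + 1) / y0 ≤ 2 / (1 - a) * epsseq w ρ (k + n + 1) := by
          rw [div_le_iff₀ hy0]
          have hcn : 0 ≤ 2 / (1 - a) * epsseq w ρ (k + n + 1) :=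
            mul_nonneg (div_nonneg (by norm_num) (by linarith)) (hεpos _).le
          have e1 : 2 / (1 - a) * ((1 - a) / 2) = 1 := by field_simp
          calc epsseq w ρ (k + n + 1)
              = 2 / (1 - a) * epsseq w ρ (k + n + 1) * ((1 - a) / 2) := by
                rw [show 2 / (1 - a) * epsseq w ρ (k + n + 1) * ((1 - a) / 2)
                  = epsseq w ρ (k + n + 1) * (2 / (1 - a) * ((1 - a) / 2)) from by ring,
                  e1, mul_one]
            _ ≤ 2 / (1 - a) * epsseq w ρ (k + n + 1) * y0 :=
              mul_le_mul_of_nonneg_left hy0ge hcn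
        have h3 := hAnn (k + n)
        have h12 := le_trans h1 h2
        rw [hidx2] at h12 h3
        rw [hidx2]
        linarith [h12, h3]
      have hleft : Summable fun k => -(2 / (1 - a) * epsseq w ρ (n + 1 + k)) :=
        (hεtail.mul_left (2 / (1 - a))).neg
      have hright : Summable fun k : ℕ =>
          Kint (tseq w (k + n + 1)) yr * (epsseq w ρ (k + n + 1) / tseq w (k + n + 1))
          - Kint (tseq w (k + n + 1)) y0 * (epsseq w ρ (k + n + 1) / tseq w (k + n + 1)) :=
        (summable_nat_add_iff n).2 hDsum
      have h1 := Summable.tsum_le_tsum htermle hleft hright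
      refine le_trans ?_ h1
      rw [tsum_neg, tsum_mul_left]
      have hSb : (∑' k : ℕ, epsseq w ρ (n + 1 + k)) ≤ 3 / 6400 * ρ n :=
        le_of_lt ((div_lt_iff₀ (hρ n)).1 hS)
      have hfact : 2 / (1 - a) * (∑' k : ℕ, epsseq w ρ (n + 1 + k))
          ≤ 3 / 3200 * (ρ n / (1 - a)) := by
        calc 2 / (1 - a) * (∑' k : ℕ, epsseq w ρ (n + 1 + k))
            ≤ 2 / (1 - a) * (3 / 6400 * ρ n) :=
              mul_le_mul_of_nonneg_left hSb (div_nonneg (by norm_num) (by linarith))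
          _ = 3 / 3200 * (ρ n / (1 - a)) := by
              field_simp
              ring
      linarith
    have hcomb : 3 / 3200 * (ρ n / (1 - a))
        = 3 / 1600 * (ρ n / (1 - a)) + -(3 / 3200 * (ρ n / (1 - a))) := by ring
    rw [hcomb]
    exact add_le_add hfin htail
  -- conclude
  rw [Ph_eq w ρ htpos hεpos hsum' hyr, Ph_eq w ρ htpos hεpos hsum' hy0]
  calc 3 / (3200 * Real.pi) * (ρ n / (1 - a))
      = 1 / Real.pi * (3 / 3200 * (ρ n / (1 - a))) := by ring
    _ ≤ 1 / Real.pi * ∑' k : ℕ,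
        (Kint (tseq w (k + 1)) yr * (epsseq w ρ (k + 1) / tseq w (k + 1))
        - Kint (tseq w (k + 1)) y0 * (epsseq w ρ (k + 1) / tseq w (k + 1))) :=
      mul_le_mul_of_nonneg_left key (by positivity)
    _ = 1 / Real.pi * ∑' k : ℕ,
          Kint (tseq w (k + 1)) yr * (epsseq w ρ (k + 1) / tseq w (k + 1))
        - 1 / Real.pi * ∑' k : ℕ,
          Kint (tseq w (k + 1)) y0 * (epsseq w ρ (k + 1) / tseq w (k + 1)) := by
        rw [hAsum.tsum_sub hBsum]
        ring
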